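/- Define the A-linear map τ : H_n → A by τ(T̃_w 1_λ) = δ_{w,1}, and the bilinear form (x,x') = τ(xx'). Then for all w, w' ∈ W and λ, λ' ∈ ufs_n, one has (T̃_w 1_λ, T̃_{w'} 1_{λ'}) = δ_{w⁻¹,w'} δ_{λ, w'λ'}; in particular the form is symmetric and the basis {T̃_w 1_λ} is dual to {T̃_{w⁻¹} 1_{wλ}}. -/

import Mathlib

/-- 34.13: in the Hecke algebra `H_n` (for a Coxeter system `(W,S)`) with basis
`T̃_w 1_λ` and the linear functional `τ(T̃_w 1_λ) = δ_{w,1}`, the bilinear form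
`(x,x') = τ(xx')` satisfies
`(T̃_w 1_λ, T̃_{w'} 1_{λ'}) = δ_{w⁻¹,w'} δ_{λ, w'λ'}`. -/
theorem stmt_19 {B W Λ H : Type*} [Group W] [DecidableEq W] [Fintype Λ] [DecidableEq Λ] (M : CoxeterMatrix B)
    (cs : CoxeterSystem M W) [MulAction W Λ]
    [Ring H] [Algebra (LaurentPolynomial ℤ) H]
    (Tt : W → H) (e : Λ → H)
    (bb : Module.Basis (W × Λ) (LaurentPolynomial ℤ) H)
    (hbb : ∀ p : W × Λ, bb p = Tt p.1 * e p.2)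
    (Wmem : W → Λ → Prop) [∀ s lam, Decidable (Wmem s lam)]
    (hone : Tt 1 = 1)
    (h1 : ∀ lam : Λ, e lam * e lam = e lam)
    (h2 : ∀ lam mu : Λ, lam ≠ mu → e lam * e mu = 0)
    (hsum : (1 : H) = ∑ lam : Λ, e lam)
    (h3 : ∀ w w' : W, cs.length (w * w') = cs.length w + cs.length w' →
      Tt w * Tt w' = Tt (w * w'))
    (h4 : ∀ (w : W) (lam : Λ), Tt w * e lam = e (w • lam) * Tt w)
    (h5 : ∀ i : B, Tt (cs.simple i) * Tt (cs.simple i) = 1 +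
        ((LaurentPolynomial.T 1 - LaurentPolynomial.T (-1) : LaurentPolynomial ℤ)) •
          ∑ lam : Λ, (if Wmem (cs.simple i) lam then Tt (cs.simple i) * e lam else 0))
    (hWmem : ∀ (i : B) (lam : Λ), Wmem (cs.simple i) lam → cs.simple i • lam = lam)
    (τ : H →ₗ[LaurentPolynomial ℤ] LaurentPolynomial ℤ)
    (hτ : ∀ (w : W) (lam : Λ), τ (Tt w * e lam) = if w = 1 then 1 else 0) :
    ∀ (w w' : W) (lam lam' : Λ),
      τ ((Tt w * e lam) * (Tt w' * e lam')) =
        if w⁻¹ = w' ∧ lam = w' • lam' then 1 else 0 := by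
  -- commutation: e lam * Tt w = Tt w * e (w⁻¹ • lam)
  have hcomm : ∀ (w : W) (lam : Λ), e lam * Tt w = Tt w * e (w⁻¹ • lam) := by
    intro w lam
    rw [h4 w (w⁻¹ • lam), smul_inv_smul]
  -- key lemma
  have key : ∀ (n : ℕ) (w' w : W) (μ : Λ), cs.length w' = n →
      τ (Tt w * Tt w' * e μ) = if w * w' = 1 then 1 else 0 := by
    intro n
    induction n using Nat.strong_induction_on with
    | _ n ih =>
      intro w' w μ hn
      by_cases h0 : w' = 1
      · subst h0
        rw [hone, mul_one, hτ, mul_one]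
      · obtain ⟨i, hi⟩ := cs.exists_leftDescent_of_ne_one h0
        set si := cs.simple i with hsi
        set w'' := si * w' with hw''def
        have hw' : w' = si * w'' := by
          rw [hw''def, ← mul_assoc, cs.simple_mul_simple_self, one_mul]
        have hlw'' : cs.length w'' + 1 = cs.length w' := cs.isLeftDescent_iff.mp hi
        have hsplit : Tt w' = Tt si * Tt w'' := by
          rw [h3 si w'' (by rw [← hw', cs.length_simple]; omega), ← hw']
        have hlt : cs.length w'' < n := by omega
        by_cases hd : cs.IsRightDescent w i
        · -- l(w * s) = l(w) - 1
          set u := w * si with hu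
          have hw : w = u * si := by
            rw [hu, mul_assoc, cs.simple_mul_simple_self, mul_one]
          have hlu : cs.length u + 1 = cs.length w := cs.isRightDescent_iff.mp hd
          have hTu : Tt u * Tt si = Tt w := by
            rw [h3 u si (by rw [← hw, cs.length_simple]; omega), ← hw]
          have expand : Tt w * Tt w' * e μ
              = Tt u * Tt w'' * e μ +
                ((LaurentPolynomial.T 1 - LaurentPolynomial.T (-1) : LaurentPolynomial ℤ)) •
                  ∑ lam : Λ, (Tt u * (if Wmem si lam then Tt si * e lam else 0) *
                    (Tt w'' * e μ)) := by
            calc Tt w * Tt w' * e μ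
                = Tt u * (Tt si * Tt si) * (Tt w'' * e μ) := by
                  rw [← hTu, hsplit]; simp only [mul_assoc]
              _ = Tt u * (1 + ((LaurentPolynomial.T 1 - LaurentPolynomial.T (-1) :
                    LaurentPolynomial ℤ)) •
                    ∑ lam : Λ, (if Wmem si lam then Tt si * e lam else 0)) *
                    (Tt w'' * e μ) := by rw [h5 i]
              _ = Tt u * Tt w'' * e μ +
                  ((LaurentPolynomial.T 1 - LaurentPolynomial.T (-1) : LaurentPolynomial ℤ)) •
                    ∑ lam : Λ, (Tt u * (if Wmem si lam then Tt si * e lam else 0) *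
                      (Tt w'' * e μ)) := by
                  simp only [mul_add, add_mul, mul_one, mul_smul_comm, smul_mul_assoc,
                    Finset.mul_sum, Finset.sum_mul, mul_assoc]
          rw [expand, map_add, map_smul, map_sum]
          have hzero : ∑ lam : Λ,
              τ (Tt u * (if Wmem si lam then Tt si * e lam else 0) * (Tt w'' * e μ)) = 0 := by
            apply Finset.sum_eq_zero
            intro lam _
            by_cases hmem : Wmem si lam
            · rw [if_pos hmem]
              have : Tt u * (Tt si * e lam) * (Tt w'' * e μ)
                  = Tt w * Tt w'' * (e (w''⁻¹ • lam) * e μ) := by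
                rw [← mul_assoc, ← mul_assoc, hTu]
                rw [mul_assoc (Tt w) (e lam) (Tt w'')]
                rw [mul_assoc (Tt w), hcomm w'' lam]
                simp only [mul_assoc]
              rw [this]
              by_cases heq : w''⁻¹ • lam = μ
              · rw [heq, h1, ih (cs.length w'') hlt w'' w μ rfl, if_neg]
                intro hcontra
                have hwe : w = w''⁻¹ := eq_inv_of_mul_eq_one_left hcontra
                have h1' : w * si = w'⁻¹ := by
                  have hinv : w'⁻¹ = w''⁻¹ * si := by
                    rw [hw', mul_inv_rev, hsi, cs.inv_simple]
                  rw [hinv, hwe]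
                have hlen2 : cs.length (w * si) = cs.length w'' + 1 := by
                  rw [h1', cs.length_inv]; omega
                have hlw : cs.length w = cs.length w'' := by rw [hwe, cs.length_inv]
                have hh := cs.isRightDescent_iff.mp hd
                rw [← hsi] at hh
                omega
              · rw [h2 _ _ heq, mul_zero, map_zero]
            · rw [if_neg hmem, mul_zero, zero_mul, map_zero]
          rw [hzero, smul_zero, add_zero, ih (cs.length w'') hlt w'' u μ rfl]
          congr 1
          rw [hu, hw', mul_assoc, ← mul_assoc si si, cs.simple_mul_simple_self, one_mul]
        · -- l(w * s) = l(w) + 1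
          have hlen : cs.length (w * si) = cs.length w + cs.length si := by
            rw [cs.length_simple]
            exact cs.not_isRightDescent_iff.mp hd
          have : Tt w * Tt w' * e μ = Tt (w * si) * Tt w'' * e μ := by
            rw [hsplit, ← h3 w si hlen]; simp only [mul_assoc]
          rw [this, ih (cs.length w'') hlt w'' (w * si) μ rfl]
          congr 1
          rw [hw', mul_assoc]
  -- main statement
  intro w w' lam lam'
  have hmul : (Tt w * e lam) * (Tt w' * e lam')
      = Tt w * Tt w' * (e (w'⁻¹ • lam) * e lam') := by
    rw [mul_assoc (Tt w) (e lam), ← mul_assoc (e lam), hcomm w' lam]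
    simp only [mul_assoc]
  rw [hmul]
  by_cases heq : w'⁻¹ • lam = lam'
  · rw [heq, h1, key (cs.length w') w' w lam' rfl]
    have : (w⁻¹ = w' ∧ lam = w' • lam') ↔ w * w' = 1 := by
      constructor
      · rintro ⟨h, -⟩; rw [← h]; group
      · intro h
        have hw : w⁻¹ = w' := inv_eq_of_mul_eq_one_right h
        exact ⟨hw, by rw [← heq, smul_inv_smul]⟩
    simp only [this]
  · rw [h2 _ _ heq, mul_zero, map_zero, if_neg]
    rintro ⟨-, h⟩
    exact heq (by rw [h, inv_smul_smul])
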